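/- Let γ : [0,c] → X be a C² curve parametrized by arc length in a smooth strictly convex normed plane, with arc-length unit circle parametrization φ and tangent function t(s) defined by γ'(s) = φ'(t(s)). Suppose η is a curve such that γ is the envelope of the left-normal lines of η, meaning γ'(s) ⊣_B η'(s) and η(s) − γ(s) is parallel to φ(u(s)) where γ'(s) = φ(u(s)). Then there exists a constant c₀ ∈ ℝ such that η(s) = γ(s) + (c₀ − s)·φ(u(s)) for all s; i.e., every involute of γ is a string involute. -/

import Mathlib

set_option maxHeartbeats 1000000 in
/-- Every involute is a string involute. Let γ be an arc-length
parametrized curve in a smooth strictly convex normed plane, φ an arc-length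
parametrization of the unit circle, u(s) with γ'(s) = φ(u(s)). If η is a curve
such that γ is the envelope of the left-normal lines of η — i.e.
γ'(s) ⊣_B η'(s) and η(s) − γ(s) is parallel to φ(u(s)), say
η(s) = γ(s) + f(s)·φ(u(s)) — then there is a constant c₀ with
η(s) = γ(s) + (c₀ − s)·φ(u(s)) for all s. -/
theorem stmt_19 {X : Type*} [NormedAddCommGroup X] [NormedSpace ℝ X]
    [StrictConvexSpace ℝ X] (hdim : Module.finrank ℝ X = 2)
    (φ φd : ℝ → X)
    (hφ : ∀ v, ‖φ v‖ = 1) (hφd : ∀ v, HasDerivAt φ (φd v) v)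
    (hφarc : ∀ v, ‖φd v‖ = 1)
    (γ η : ℝ → X) (u : ℝ → ℝ) (ηd : ℝ → X) (f : ℝ → ℝ)
    (hu : Differentiable ℝ u)
    (hγ : ∀ s, HasDerivAt γ (φ (u s)) s)
    (hη : ∀ s, HasDerivAt η (ηd s) s)
    (hBirkhoff : ∀ s, ∀ t : ℝ, ‖φ (u s)‖ ≤ ‖φ (u s) + t • ηd s‖)
    (hf : Differentiable ℝ f)
    (hparallel : ∀ s, η s = γ s + f s • φ (u s)) :
    ∃ c₀ : ℝ, ∀ s, η s = γ s + (c₀ - s) • φ (u s) := by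
  have hfd : ∀ s, deriv f s = -1 := by
    intro s
    set x := φ (u s) with hx
    set w := φd (u s) with hw
    set a : ℝ := 1 + deriv f s with ha
    set b : ℝ := f s * deriv u s with hb
    have hηs : ηd s = a • x + b • w := by
      have h1 : HasDerivAt (fun t => φ (u t)) (deriv u s • w) s :=
        (hφd (u s)).scomp s (hu s).hasDerivAt
      have h2 : HasDerivAt (fun t => f t • φ (u t))
          (f s • deriv u s • w + deriv f s • x) s :=
        (hf s).hasDerivAt.smul h1
      have h3 : HasDerivAt η (x + (f s • deriv u s • w + deriv f s • x)) s := by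
        have hη' : η = fun t => γ t + f t • φ (u t) := funext hparallel
        rw [hη']
        exact (hγ s).add h2
      have huni := h3.unique (hη s)
      rw [← huni, ha, hb]
      module
    -- show a = 0
    have hA : a = 0 := by
      by_contra hA0
      have habs : 0 < |a| := abs_pos.mpr hA0
      set r : ℝ → X := fun ε => x + ε • w - φ (u s + ε) with hr
      have hr0 : r 0 = 0 := by simp [hr, hx]
      have hrd : HasDerivAt r 0 0 := by
        have hφc : HasDerivAt (fun ε : ℝ => φ (u s + ε)) ((1:ℝ) • w) 0 := by
          have hin : HasDerivAt (fun ε : ℝ => u s + ε) 1 0 :=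
            (hasDerivAt_id 0).const_add (u s)
          have := (hφd (u s + 0)).scomp 0 hin
          simpa [Function.comp_def] using this
        have h := ((hasDerivAt_const (0:ℝ) x).add
          ((hasDerivAt_id (0:ℝ)).smul_const w)).sub hφc
        simpa [hr, Pi.add_def, Pi.sub_def] using h
      have hlo : (fun ε => r ε) =o[nhds (0:ℝ)] fun ε => ε := by
        have := hasDerivAt_iff_isLittleO.mp hrd
        simpa [hr0] using this
      set c : ℝ := |a| / (4 * (|b| + 1)) with hc
      have hcpos : 0 < c := by positivity
      have hev := hlo.def hcpos
      obtain ⟨δ₁, hδ₁, hball⟩ := Metric.eventually_nhds_iff.mp hev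
      set δ : ℝ := min (1/2) (|a| * δ₁ / (8 * (|b| + 1))) with hδ
      have hδpos : 0 < δ := lt_min (by norm_num) (by positivity)
      have hδhalf : δ ≤ 1/2 := min_le_left _ _
      have hδ₂ : δ ≤ |a| * δ₁ / (8 * (|b| + 1)) := min_le_right _ _
      clear_value δ
      set t : ℝ := -δ / a with ht
      have hta : t * a = -δ := by rw [ht]; exact div_mul_cancel₀ _ hA0
      have h1ta : 1 + t * a = 1 - δ := by rw [hta]; ring
      have h1tapos : (0:ℝ) < 1 - δ := by linarith
      have htabs0 : |t| = δ / |a| := by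
        rw [ht, abs_div, abs_neg, abs_of_pos hδpos]
      clear_value t
      set ε : ℝ := t * b / (1 - δ) with hε
      have heps : (1 - δ) * ε = t * b := by
        rw [hε]; field_simp
      clear_value ε
      -- bound on |ε|
      have htabs : |t| = δ / |a| := htabs0
      have hεabs : |ε| ≤ 2 * δ * (|b| + 1) / |a| := by
        have h2 : |ε| = |t| * |b| / (1 - δ) := by
          have : ε = t * b / (1 - δ) := by
            field_simp at heps ⊢; linarith [heps]
          rw [this, abs_div, abs_mul, abs_of_pos h1tapos]
        have h4 : |ε| ≤ 2 * (|t| * |b|) := by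
          rw [h2, div_le_iff₀ h1tapos]
          nlinarith [mul_nonneg (abs_nonneg t) (abs_nonneg b)]
        have h5 : 2 * (|t| * |b|) = 2 * δ * |b| / |a| := by
          rw [htabs]; ring
        have h6 : 2 * δ * |b| / |a| ≤ 2 * δ * (|b| + 1) / |a| := by
          gcongr
          linarith
        linarith [h5 ▸ h4]
      have hεsmall : |ε| < δ₁ := by
        have hd : 2 * δ * (|b| + 1) / |a| ≤ δ₁ / 4 := by
          rw [div_le_div_iff₀ habs (by norm_num : (0:ℝ) < 4)]
          have h7 := hδ₂
          rw [le_div_iff₀ (by positivity : (0:ℝ) < 8 * (|b| + 1))] at h7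
          nlinarith [abs_nonneg b]
        linarith
      have hrε : ‖r ε‖ ≤ c * |ε| := by
        have := hball (by simpa [Real.dist_eq] using hεsmall)
        simpa [Real.norm_eq_abs] using this
      -- key inequality
      have hkey : (1:ℝ) ≤ (1 - δ) * (1 + ‖r ε‖) := by
        have hB := hBirkhoff s t
        rw [hφ (u s)] at hB
        have hsplit : x + t • ηd s = (1 - δ) • (x + ε • w) := by
          rw [hηs]
          match_scalars
          · linarith [h1ta]
          · linarith [heps]
        rw [hsplit] at hB
        have hnorm : ‖(1 - δ) • (x + ε • w)‖ = (1 - δ) * ‖x + ε • w‖ := by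
          rw [norm_smul, Real.norm_eq_abs, abs_of_pos h1tapos]
        rw [hnorm] at hB
        have hxe : ‖x + ε • w‖ ≤ 1 + ‖r ε‖ := by
          have : x + ε • w = φ (u s + ε) + r ε := by
            rw [hr]; exact (add_sub_cancel _ _).symm
          rw [this]
          calc ‖φ (u s + ε) + r ε‖ ≤ ‖φ (u s + ε)‖ + ‖r ε‖ := norm_add_le _ _
            _ = 1 + ‖r ε‖ := by rw [hφ]
        nlinarith [norm_nonneg (r ε)]
      -- derive contradiction
      have hfinal : ‖r ε‖ ≤ c * (2 * δ * (|b| + 1) / |a|) := by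
        calc ‖r ε‖ ≤ c * |ε| := hrε
          _ ≤ c * (2 * δ * (|b| + 1) / |a|) := by
            exact mul_le_mul_of_nonneg_left hεabs hcpos.le
      have hhalf : c * (2 * δ * (|b| + 1) / |a|) = δ / 2 := by
        rw [hc]; field_simp; ring
      rw [hhalf] at hfinal
      nlinarith [norm_nonneg (r ε)]
    rw [ha] at hA; linarith
  -- f s + s is constant
  have hg : ∀ t : ℝ, deriv (fun t => f t + t) t = 0 := by
    intro t
    have h2 : HasDerivAt (fun t => f t + t) (deriv f t + 1) t :=
      (hf t).hasDerivAt.add (hasDerivAt_id t)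
    rw [h2.deriv, hfd t]; ring
  have hconst : ∀ s : ℝ, f s + s = f 0 + 0 := fun s =>
    is_const_of_deriv_eq_zero (hf.add differentiable_id) hg s 0
  refine ⟨f 0, fun s => ?_⟩
  rw [hparallel s]
  have : f s = f 0 - s := by have := hconst s; linarith
  rw [this]
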